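/- The matrix M_P has (1,1,1,1,1,1,1,1) as both a left eigenvector and a right eigenvector with eigenvalue 16 (its Perron–Frobenius eigenvalue), and 16 strictly exceeds the absolute value of every other eigenvalue of M_P. -/

import Mathlib

def MP : Matrix (Fin 8) (Fin 8) ℚ :=
  !![1,1,1,1,3,3,3,3;
     9,5,2,0,0,0,0,0;
     0,4,6,6,0,0,0,0;
     0,0,1,3,3,3,3,3;
     3,3,3,3,1,1,1,1;
     0,0,0,0,9,5,2,0;
     0,0,0,0,0,4,6,6;
     3,3,3,3,0,0,1,3]

noncomputable def MPC : Matrix (Fin 8) (Fin 8) ℂ := MP.map (Rat.cast)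

private def B1 : Matrix (Fin 8) (Fin 8) ℚ :=
  !![27,27,27,27,33,33,33,33;
     45,37,29,21,27,27,27,27;
     36,40,44,48,18,18,18,18;
     18,22,26,30,36,36,36,36;
     33,33,33,33,27,27,27,27;
     27,27,27,27,45,37,29,21;
     18,18,18,18,36,40,44,48;
     36,36,36,36,18,22,26,30]

private def B2 : Matrix (Fin 8) (Fin 8) ℚ :=
  !![72,8,8,8,-24,-24,-24,-24;
     -126,6,-9,21,27,27,27,27;
     36,-36,-6,-66,18,18,18,18;
     18,22,7,37,-21,-21,-21,-21;
     -24,-24,-24,-24,72,8,8,8;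
     27,27,27,27,-126,6,-9,21;
     18,18,18,18,36,-36,-6,-66;
     -21,-21,-21,-21,18,22,7,37]

set_option maxHeartbeats 2000000
set_option maxRecDepth 2000

private lemma hB1 : MP * (MP - Matrix.diagonal (fun _ => (1:ℚ))) = B1 := by
  ext i j
  fin_cases i <;> fin_cases j <;> with_unfolding_all rfl

private lemma hB2 :
    (MP - Matrix.diagonal (fun _ => (4:ℚ))) * (MP - Matrix.diagonal (fun _ => (16:ℚ))) = B2 := by
  ext i j
  fin_cases i <;> fin_cases j <;> with_unfolding_all rfl

private lemma hB12 : B1 * B2 = 0 := by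
  ext i j
  fin_cases i <;> fin_cases j <;> with_unfolding_all rfl

private lemma keyQ : MP * (MP - Matrix.diagonal (fun _ => (1:ℚ))) *
    ((MP - Matrix.diagonal (fun _ => (4:ℚ))) * (MP - Matrix.diagonal (fun _ => (16:ℚ)))) = 0 := by
  rw [hB1, hB2, hB12]

private lemma keyC : MPC * (MPC - Matrix.diagonal (fun _ => (1:ℂ))) *
    ((MPC - Matrix.diagonal (fun _ => (4:ℂ))) * (MPC - Matrix.diagonal (fun _ => (16:ℂ)))) = 0 := by
  have h := congrArg (Rat.castHom ℂ).mapMatrix keyQ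
  simp only [map_mul, map_sub, map_zero, RingHom.mapMatrix_apply,
    Matrix.diagonal_map (map_zero (Rat.castHom ℂ))] at h
  have hM : MP.map (Rat.castHom ℂ) = MPC := rfl
  rw [hM] at h
  simp only [map_one, map_ofNat] at h
  exact h

/-- `(1,…,1)` is both a left and a right eigenvector of `M_P` with
eigenvalue 16, and 16 strictly dominates the absolute value of every
other eigenvalue of `M_P`. -/
theorem MP_perron_frobenius :
    Matrix.vecMul ![1,1,1,1,1,1,1,1] MP = (16 : ℚ) • ![1,1,1,1,1,1,1,1] ∧
    MP.mulVec ![1,1,1,1,1,1,1,1] = (16 : ℚ) • ![1,1,1,1,1,1,1,1] ∧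
    ∀ μ : ℂ, MPC.charpoly.IsRoot μ → μ ≠ 16 → ‖μ‖ < 16 := by
  refine ⟨?_, ?_, ?_⟩
  · funext j
    fin_cases j <;>
      norm_num [Matrix.vecMul, dotProduct, Fin.sum_univ_succ, MP]
  · funext i
    fin_cases i <;>
      norm_num [Matrix.mulVec, dotProduct, Fin.sum_univ_succ, MP]
  · intro μ hroot hne
    -- turn the root of the charpoly into an eigenvector
    have hev : MPC.charpoly.eval μ = 0 := hroot
    rw [Matrix.charpoly, eval_det, Matrix.matPolyEquiv_charmatrix] at hev
    simp only [Polynomial.eval_sub, Polynomial.eval_X, Polynomial.eval_C] at hev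
    obtain ⟨v, hv0, hv⟩ := Matrix.exists_mulVec_eq_zero_iff.mpr hev
    have hMv : MPC.mulVec v = μ • v := by
      rw [Matrix.sub_mulVec, sub_eq_zero] at hv
      rw [← hv, Matrix.scalar_apply, Matrix.diagonal_const_mulVec]
    have step : ∀ c : ℂ, (MPC - Matrix.diagonal (fun _ => c)).mulVec v = (μ - c) • v := by
      intro c
      rw [Matrix.sub_mulVec, hMv, Matrix.diagonal_const_mulVec, sub_smul]
    have hfin : (μ * ((μ - 1) * ((μ - 4) * (μ - 16)))) • v = 0 := by
      have h := congrArg (fun A : Matrix (Fin 8) (Fin 8) ℂ => A.mulVec v) keyC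
      simp only [Matrix.zero_mulVec, ← Matrix.mulVec_mulVec, step, Matrix.mulVec_smul, hMv,
        smul_smul] at h
      rw [← h]
      ring_nf
    have hμ : μ * ((μ - 1) * ((μ - 4) * (μ - 16))) = 0 :=
      (smul_eq_zero.mp hfin).resolve_right hv0
    have : μ = 0 ∨ μ = 1 ∨ μ = 4 ∨ μ = 16 := by
      rcases mul_eq_zero.mp hμ with h | h
      · exact Or.inl h
      rcases mul_eq_zero.mp h with h | h
      · exact Or.inr (Or.inl (by linear_combination h))
      rcases mul_eq_zero.mp h with h | h
      · exact Or.inr (Or.inr (Or.inl (by linear_combination h)))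
      · exact Or.inr (Or.inr (Or.inr (by linear_combination h)))
    rcases this with h | h | h | h
    · simp [h]
    · simp [h]
    · rw [h]; simp only [Complex.norm_ofNat]; norm_num
    · exact absurd h hne
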